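/- If π is an M-projection on a Banach space X, then its adjoint π' on the dual space X' is an L-projection. -/

import Mathlib

def IsLProj {X : Type*} [NormedAddCommGroup X] [NormedSpace ℝ X]
    (π : X →L[ℝ] X) : Prop :=
  π.comp π = π ∧ ∀ x, ‖x‖ = ‖π x‖ + ‖x - π x‖

def IsMProj {X : Type*} [NormedAddCommGroup X] [NormedSpace ℝ X]
    (π : X →L[ℝ] X) : Prop :=
  π.comp π = π ∧ ∀ x, ‖x‖ = max ‖π x‖ ‖x - π x‖

/-- The adjoint (dual map) of `π`, sending `f ∈ X'` to `f ∘ π`. -/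
noncomputable def adjointMap {X : Type*} [NormedAddCommGroup X] [NormedSpace ℝ X]
    (π : X →L[ℝ] X) : StrongDual ℝ X →L[ℝ] StrongDual ℝ X :=
  (ContinuousLinearMap.compL ℝ X X ℝ).flip π

/-- The adjoint of an M-projection is an L-projection on the dual space. -/
theorem adjoint_of_mproj_is_lproj {X : Type*} [NormedAddCommGroup X]
    [NormedSpace ℝ X] [CompleteSpace X] (π : X →L[ℝ] X) (hπ : IsMProj π) :
    (∀ f : StrongDual ℝ X, adjointMap π f = f.comp π) ∧
      IsLProj (adjointMap π) := by
  obtain ⟨hidem, hM⟩ := hπ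
  have hpp : ∀ x, π (π x) = π x := fun x => DFunLike.congr_fun hidem x
  have hadj : ∀ f : StrongDual ℝ X, adjointMap π f = f.comp π := fun f => rfl
  have happ : ∀ (f : StrongDual ℝ X) (x : X), adjointMap π f x = f (π x) :=
    fun f x => rfl
  refine ⟨hadj, ?_, ?_⟩
  · ext f x
    simp only [ContinuousLinearMap.comp_apply, happ, hpp]
  · intro f
    set g := adjointMap π with hg
    have hsub : ∀ x, (f - g f) x = f (x - π x) := by
      intro x
      simp [happ, map_sub]
    refine le_antisymm ?_ ?_
    · -- ‖f‖ ≤ ‖g f‖ + ‖f - g f‖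
      refine ContinuousLinearMap.opNorm_le_bound _ (by positivity) fun x => ?_
      have : f x = g f x + (f - g f) x := by simp
      calc ‖f x‖ = ‖g f x + (f - g f) x‖ := by rw [← this]
        _ ≤ ‖g f x‖ + ‖(f - g f) x‖ := norm_add_le _ _
        _ ≤ ‖g f‖ * ‖x‖ + ‖f - g f‖ * ‖x‖ :=
            add_le_add ((g f).le_opNorm x) ((f - g f).le_opNorm x)
        _ = (‖g f‖ + ‖f - g f‖) * ‖x‖ := by ring
    · -- ‖g f‖ + ‖f - g f‖ ≤ ‖f‖
      refine le_of_forall_pos_le_add fun ε hε => ?_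
      obtain ⟨x, hx1, hx2⟩ := (g f).exists_lt_apply_of_lt_opNorm
        (show ‖g f‖ - ε / 2 < ‖g f‖ by linarith)
      obtain ⟨y, hy1, hy2⟩ := (f - g f).exists_lt_apply_of_lt_opNorm
        (show ‖f - g f‖ - ε / 2 < ‖f - g f‖ by linarith)
      -- fix signs
      set a : X := if 0 ≤ f (π x) then x else -x with ha
      set b : X := if 0 ≤ f (y - π y) then y else -y with hb
      have hfa : f (π a) = |f (π x)| := by
        rw [ha]; split_ifs with h
        · rw [abs_of_nonneg h]
        · rw [map_neg, map_neg, abs_of_neg (lt_of_not_ge h)]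
      have hfb : f (b - π b) = |f (y - π y)| := by
        rw [hb]; split_ifs with h
        · rw [abs_of_nonneg h]
        · rw [abs_of_neg (lt_of_not_ge h)]
          simp [neg_sub, map_neg]
          ring
      have hna : ‖a‖ < 1 := by rw [ha]; split_ifs <;> simpa
      have hnb : ‖b‖ < 1 := by rw [hb]; split_ifs <;> simpa
      have hπa : ‖π a‖ ≤ 1 := le_trans (le_trans (le_max_left _ _) (hM a).ge) hna.le
      have hπb : ‖b - π b‖ ≤ 1 := le_trans (le_trans (le_max_right _ _) (hM b).ge) hnb.le
      set z : X := π a + (b - π b) with hz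
      have hπz : π z = π a := by
        rw [hz]
        simp [map_add, map_sub, hpp]
      have hz1 : ‖z‖ ≤ 1 := by
        rw [hM z, hπz]
        have : z - π a = b - π b := by rw [hz]; abel
        rw [this]
        exact max_le hπa hπb
      have hfz : f z = f (π a) + f (b - π b) := by rw [hz, map_add]
      have h1 : ‖g f‖ - ε / 2 < f (π a) := by
        rw [hfa]
        calc ‖g f‖ - ε / 2 < ‖g f x‖ := hx2
          _ = |f (π x)| := by rw [happ]; exact rfl
      have h2 : ‖f - g f‖ - ε / 2 < f (b - π b) := by
        rw [hfb]
        calc ‖f - g f‖ - ε / 2 < ‖(f - g f) y‖ := hy2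
          _ = |f (y - π y)| := by rw [hsub]; exact rfl
      have hfz_le : f z ≤ ‖f‖ := by
        calc f z ≤ |f z| := le_abs_self _
          _ = ‖f z‖ := rfl
          _ ≤ ‖f‖ * ‖z‖ := f.le_opNorm z
          _ ≤ ‖f‖ * 1 := mul_le_mul_of_nonneg_left hz1 (norm_nonneg f)
          _ = ‖f‖ := mul_one _
      linarith [hfz ▸ hfz_le]
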